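/- (Lemma on monotonicity, NVCG case) The NVCG fee of broker i, viewed as a function of his own bid, fee_i(x) := c_i^V(x) − Δ(x), is affine with slope ω_i·(q−1): for all x, y ∈ ℝ, fee_i(x) − fee_i(y) = ω_i·(q−1)·(x − y). In particular, if q ≥ 2 then fee_i is strictly increasing in broker i's own bid. -/

import Mathlib

/-- Monotonicity lemma, NVCG case.
Fix `i ∈ Q`, the other brokers' second-round bids `φ k` (`k ≠ i`) and the
global bid `φg`. Viewing broker `i`'s own bid as the variable `x`, set
`cV x i = (φg - ∑_{k∈Q,k≠i} ω k * φ k)/ω i` (independent of `x`),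
`cV x j = (φg - ω i * x - ∑_{k∈Q,k≠i,k≠j} ω k * φ k)/ω j` for `j ≠ i`, and
`Δ x = ∑_{j∈Q} ω j * cV x j - φg`. Then the NVCG fee
`fee x = cV x i - Δ x` is affine with slope `ω i * (q - 1)`:
`fee x - fee y = ω i * (q-1) * (x - y)` for all `x y`, and if `q ≥ 2` then
`fee` is strictly increasing in broker `i`'s own bid. -/
theorem nvcg_fee_monotone {ι : Type*} [DecidableEq ι]
    (Q : Finset ι) (hQ : Q.Nonempty) (i : ι) (hi : i ∈ Q)
    (ω φ : ι → ℝ) (hω : ∀ k ∈ Q, 0 < ω k) (φg : ℝ)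
    (cV : ℝ → ι → ℝ)
    (hcVi : ∀ x : ℝ, cV x i = (φg - ∑ k ∈ Q.erase i, ω k * φ k) / ω i)
    (hcVj : ∀ x : ℝ, ∀ j ∈ Q.erase i,
      cV x j = (φg - ω i * x - ∑ k ∈ (Q.erase i).erase j, ω k * φ k) / ω j)
    (Δ : ℝ → ℝ) (hΔ : ∀ x : ℝ, Δ x = (∑ j ∈ Q, ω j * cV x j) - φg)
    (fee : ℝ → ℝ) (hfee : ∀ x : ℝ, fee x = cV x i - Δ x) :
    (∀ x y : ℝ, fee x - fee y = ω i * ((Q.card : ℝ) - 1) * (x - y))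
    ∧ (2 ≤ Q.card → StrictMono fee) := by
  have key : ∀ x y : ℝ, fee x - fee y = ω i * ((Q.card : ℝ) - 1) * (x - y) := by
    intro x y
    have hterm : ∀ j ∈ Q.erase i, ω j * cV x j - ω j * cV y j = ω i * y - ω i * x := by
      intro j hj
      have hωj : ω j ≠ 0 := ne_of_gt (hω j (Finset.mem_of_mem_erase hj))
      rw [hcVj x j hj, hcVj y j hj]
      field_simp
      ring
    have hsum : Δ x - Δ y = ((Q.erase i).card : ℝ) * (ω i * y - ω i * x) := by
      rw [hΔ x, hΔ y]
      have hsplit : ∀ z : ℝ, ∑ j ∈ Q, ω j * cV z j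
          = ω i * cV z i + ∑ j ∈ Q.erase i, ω j * cV z j := by
        intro z
        rw [← Finset.add_sum_erase Q _ hi]
      rw [hsplit x, hsplit y]
      have : (∑ j ∈ Q.erase i, ω j * cV x j) - ∑ j ∈ Q.erase i, ω j * cV y j
          = ∑ j ∈ Q.erase i, (ω j * cV x j - ω j * cV y j) := by
        rw [Finset.sum_sub_distrib]
      have h2 : ∑ j ∈ Q.erase i, (ω j * cV x j - ω j * cV y j)
          = ((Q.erase i).card : ℝ) * (ω i * y - ω i * x) := by
        rw [Finset.sum_congr rfl hterm, Finset.sum_const, nsmul_eq_mul]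
      rw [hcVi x, hcVi y]
      linarith [this, h2]
    have hcard : ((Q.erase i).card : ℝ) = (Q.card : ℝ) - 1 := by
      rw [Finset.card_erase_of_mem hi]
      have : 1 ≤ Q.card := Finset.card_pos.mpr hQ
      push_cast [Nat.cast_sub this]
      ring
    rw [hfee x, hfee y, hcVi x, hcVi y]
    rw [hcard] at hsum
    linarith [hsum]
  refine ⟨key, fun hq => ?_⟩
  intro x y hxy
  have h1 : (0:ℝ) < ω i * ((Q.card : ℝ) - 1) := by
    apply mul_pos (hω i hi)
    have : (2:ℝ) ≤ (Q.card : ℝ) := by exact_mod_cast hq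
    linarith
  have := key y x
  nlinarith
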